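/- arXiv:2003.08247 — 2 statements merged into one kernel-verified Lean document; each statement's English description precedes it below -/
import Mathlib

section
/- A set H of edges of a network N = (D, s, t) contains the edge set of a directed s–t path if and only if the vector χ_t − χ_s lies in the convex cone generated by the vectors {χ_b − χ_a : ab ∈ H}, where χ_v ∈ ℝ^{V(N)} is the indicator vector of vertex v. -/
/-- A directed `s`–`t` path, recorded as its list of (distinct) vertices,
starting at `s` and ending at `t`. -/
def IsStPath {V : Type*} (s t : V) (p : List V) : Prop :=
  p.Nodup ∧ p.head? = some s ∧ p.getLast? = some t

/-- The (directed) edges of a path given by its vertex list. -/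
def pathEdges {V : Type*} (p : List V) : List (V × V) := p.zip p.tail

/-- `v` lies in the convex cone generated by `S`: it is a nonnegative linear
combination of finitely many points of `S`. -/
def InCone {E : Type*} [AddCommMonoid E] [Module ℝ E] (S : Set E) (v : E) : Prop :=
  ∃ (m : ℕ) (c : Fin m → ℝ) (x : Fin m → E),
    (∀ j, 0 ≤ c j) ∧ (∀ j, x j ∈ S) ∧ ∑ j, c j • x j = v

lemma pathEdges_cons_cons {V : Type*} (x y : V) (r : List V) :
    pathEdges (x :: y :: r) = (x, y) :: pathEdges (y :: r) := by
  simp [pathEdges]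

lemma pathEdges_suffix_cons {V : Type*} (x : V) (l : List V) :
    pathEdges l <:+ pathEdges (x :: l) := by
  cases l with
  | nil => simp [pathEdges]
  | cons y r => rw [pathEdges_cons_cons]; exact List.suffix_cons _ _

lemma pathEdges_suffix {V : Type*} {l q : List V} (h : l <:+ q) :
    pathEdges l <:+ pathEdges q := by
  obtain ⟨c, rfl⟩ := h
  induction c with
  | nil => simp
  | cons x c ih => exact ih.trans (pathEdges_suffix_cons x (c ++ l))

lemma exists_path_of_reflTransGen {V : Type*} {r : V → V → Prop} {s t : V}
    (h : Relation.ReflTransGen r s t) :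
    ∃ p, IsStPath s t p ∧ ∀ e ∈ pathEdges p, r e.1 e.2 := by
  induction h using Relation.ReflTransGen.head_induction_on with
  | refl => exact ⟨[t], ⟨List.nodup_singleton t, rfl, rfl⟩, by simp [pathEdges]⟩
  | head hab _ ih =>
    rename_i a b _
    obtain ⟨q, ⟨hnd, hhd, hlast⟩, hedges⟩ := ih
    obtain ⟨q', rfl⟩ : ∃ q', q = b :: q' := by
      cases q with
      | nil => simp at hhd
      | cons x q' => simp at hhd; exact ⟨q', by rw [hhd]⟩
    by_cases ha : a ∈ b :: q'
    · obtain ⟨q₁, q₂, hsplit⟩ := List.append_of_mem ha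
      have hsuf : (a :: q₂) <:+ (b :: q') := ⟨q₁, hsplit.symm⟩
      refine ⟨a :: q₂, ⟨hnd.sublist hsuf.sublist, rfl, ?_⟩, ?_⟩
      · rw [← hlast, hsplit]
        rw [List.getLast?_append, Option.or_of_isSome (List.getLast?_isSome.mpr (by simp))]
      · intro e he
        exact hedges e ((pathEdges_suffix hsuf).sublist.mem he)
    · refine ⟨a :: b :: q', ⟨List.nodup_cons.mpr ⟨ha, hnd⟩, rfl, ?_⟩, ?_⟩
      · rw [List.getLast?_cons_cons]; exact hlast
      · intro e he
        rw [pathEdges_cons_cons, List.mem_cons] at he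
        rcases he with he | he
        · subst he; exact hab
        · exact hedges e he

/-- A set `H` of edges of a network contains the edge set of a directed
`s`–`t` path iff `χ_t - χ_s` lies in the convex cone generated by the vectors
`χ_b - χ_a` for edges `ab ∈ H`. -/
theorem stmt_16 {V : Type*} [Fintype V] [DecidableEq V] (s t : V)
    (H : Set (V × V)) (hN : ∀ e ∈ H, e.2 ≠ s ∧ e.1 ≠ t) :
    (∃ p : List V, IsStPath s t p ∧ ∀ e ∈ pathEdges p, e ∈ H) ↔
      InCone {x : V → ℝ | ∃ e ∈ H, x = Pi.single e.2 (1 : ℝ) - Pi.single e.1 1}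
        (Pi.single t (1 : ℝ) - Pi.single s 1) := by
  classical
  constructor
  · rintro ⟨p, ⟨hnd, hhd, hlast⟩, hH'⟩
    have hne : p ≠ [] := by rintro rfl; simp at hhd
    have hn : 0 < p.length := List.length_pos_iff.mpr hne
    set g : ℕ → (V → ℝ) := fun i => Pi.single (p.getD i t) 1 with hg
    refine ⟨p.length - 1, fun _ => 1, fun j => g (j + 1) - g j,
      fun _ => zero_le_one, ?_, ?_⟩
    · intro j
      have hj1 : (j : ℕ) + 1 < p.length := by omega
      have hj : (j : ℕ) < p.length := by omega
      refine ⟨(p[(j : ℕ)], p[(j : ℕ) + 1]), ?_, ?_⟩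
      · apply hH'
        have hlen : (j : ℕ) < (p.zip p.tail).length := by
          simp only [List.length_zip, List.length_tail]; omega
        have : (p.zip p.tail)[(j : ℕ)] = (p[(j : ℕ)], p[(j : ℕ) + 1]) := by
          rw [List.getElem_zip, List.getElem_tail]
        rw [← this]
        exact List.getElem_mem hlen
      · simp only [hg, List.getD_eq_getElem p t hj, List.getD_eq_getElem p t hj1]
    · simp only [one_smul]
      rw [Fin.sum_univ_eq_sum_range (fun j => g (j + 1) - g j), Finset.sum_range_sub]
      have h0 : g 0 = Pi.single s 1 := by
        have : p.getD 0 t = s := by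
          rw [List.getD_eq_getElem p t hn]
          have := (List.head?_eq_getElem? : p.head? = p[0]?)
          rw [hhd, List.getElem?_eq_getElem hn] at this
          exact (Option.some_injective _ this).symm
        show Pi.single (p.getD 0 t) 1 = Pi.single s 1
        rw [this]
      have h1 : g (p.length - 1) = Pi.single t 1 := by
        have hl : p.length - 1 < p.length := by omega
        have : p.getD (p.length - 1) t = t := by
          rw [List.getD_eq_getElem p t hl]
          have := (List.getLast?_eq_getElem? : p.getLast? = p[p.length - 1]?)
          rw [hlast, List.getElem?_eq_getElem hl] at this
          exact (Option.some_injective _ this.symm)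
        show Pi.single (p.getD (p.length - 1) t) 1 = Pi.single t 1
        rw [this]
      rw [h0, h1]
  · rintro ⟨m, c, x, hc, hx, hsum⟩
    choose e he hxe using hx
    set r : V → V → Prop := fun u v => ∃ j, 0 < c j ∧ e j = (u, v) with hr
    have hreach : Relation.ReflTransGen r s t := by
      by_contra hnt
      set R : Finset V := Finset.univ.filter (fun v => Relation.ReflTransGen r s v) with hR
      have hsR : s ∈ R := by simp [hR]; exact Relation.ReflTransGen.refl
      have htR : t ∉ R := by simp [hR]; exact hnt
      have key : ∀ j, 0 < c j → (e j).1 ∈ R → (e j).2 ∈ R := by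
        intro j hj h1
        simp only [hR, Finset.mem_filter, Finset.mem_univ, true_and] at h1 ⊢
        exact h1.tail ⟨j, hj, by ext <;> rfl⟩
      have heval : ∀ v, ∑ j, c j * x j v =
          (if v = t then (1:ℝ) else 0) - (if v = s then 1 else 0) := by
        intro v
        have := congrFun hsum v
        simpa [Finset.sum_apply, Pi.single_apply, smul_eq_mul] using this
      have hLHS : ∑ v ∈ R, ∑ j, c j * x j v =
          ∑ j, c j * ((if (e j).2 ∈ R then (1:ℝ) else 0) - (if (e j).1 ∈ R then 1 else 0)) := by
        rw [Finset.sum_comm]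
        refine Finset.sum_congr rfl fun j _ => ?_
        rw [← Finset.mul_sum]
        congr 1
        rw [hxe j]
        simp only [Pi.sub_apply, Pi.single_apply, Finset.sum_sub_distrib,
          Finset.sum_ite_eq']
      have hRHS : ∑ v ∈ R, ((if v = t then (1:ℝ) else 0) - (if v = s then 1 else 0)) = -1 := by
        rw [Finset.sum_sub_distrib, Finset.sum_ite_eq', Finset.sum_ite_eq']
        simp [hsR, htR]
      have hpos : (0:ℝ) ≤ ∑ j, c j * ((if (e j).2 ∈ R then (1:ℝ) else 0) - (if (e j).1 ∈ R then 1 else 0)) := by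
        refine Finset.sum_nonneg fun j _ => ?_
        rcases eq_or_lt_of_le (hc j) with h0 | h0
        · rw [← h0]; ring_nf; exact le_refl 0
        · refine mul_nonneg (le_of_lt h0) ?_
          by_cases h1 : (e j).1 ∈ R
          · simp [h1, key j h0 h1]
          · simp [h1]
            split <;> norm_num
      have : ∑ v ∈ R, ∑ j, c j * x j v = -1 := by
        rw [← hRHS]
        exact Finset.sum_congr rfl fun v _ => heval v
      rw [hLHS] at this
      linarith
    obtain ⟨p, hp, hedges⟩ := exists_path_of_reflTransGen hreach
    refine ⟨p, hp, fun ed hed => ?_⟩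
    obtain ⟨j, _, hej⟩ := hedges ed hed
    have : ed = e j := by rw [hej]
    rw [this]; exact he j
end

section
/- Let G, H be two families of edge sets in a network, neither possessing a rainbow s–t path, regimented by R = (Q, I) and S = (P, J) respectively. Suppose G \ H = {G_0} and H \ G = {H_0} (as multisets, differing in a single set each). Then either G_0 is inessential in R and H_0 is inessential in S, or I(G_0) = J(H_0). -/
/-- The inner vertices of a path: all vertices except the first and last. -/
def innerVerts {V : Type*} (p : List V) : List V := p.tail.dropLast

/-- The family `F` of edge sets has a rainbow `s`–`t` path: an `s`–`t` path
whose edges are injectively represented by distinct members of `F`. -/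
def HasRainbowStPath {V ι : Type*} (s t : V) (F : ι → Set (V × V)) : Prop :=
  ∃ p : List V, IsStPath s t p ∧
    ∃ g : Fin (pathEdges p).length → ι, Function.Injective g ∧
      ∀ j, (pathEdges p).get j ∈ F (g j)

/-- A regimentation of a family `F` of edge sets of the network `(V, s, t)`:
a set `paths` of internally disjoint `s`–`t` paths covering all vertices,
together with a map `I` from the essential subfamily `ess` onto `paths`, such
that the edges of `I i` all belong to `F i`, and each path `p` has exactly
`|E(p)| - 1` essential sets assigned to it. -/
structure Regimentation {V ι : Type*} (s t : V) (F : ι → Set (V × V)) where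
  paths : Set (List V)
  isPath : ∀ p ∈ paths, IsStPath s t p
  intDisj : ∀ p ∈ paths, ∀ q ∈ paths, p ≠ q →
    ∀ v ∈ innerVerts p, v ∉ innerVerts q
  cover : ∀ v : V, ∃ p ∈ paths, v ∈ p
  ess : Set ι
  I : ι → List V
  I_mem : ∀ i ∈ ess, I i ∈ paths
  I_surj : ∀ p ∈ paths, ∃ i ∈ ess, I i = p
  I_rep : ∀ i ∈ ess, ∀ e ∈ pathEdges (I i), e ∈ F i
  I_count : ∀ p ∈ paths, {i | i ∈ ess ∧ I i = p}.ncard = (pathEdges p).length - 1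

namespace Ex19
open List

variable {V : Type*}

theorem pathEdges_length (p : List V) : (pathEdges p).length = p.length - 1 := by
  simp [pathEdges]

theorem pathEdges_getElem (p : List V) (k : ℕ) (hk : k < (pathEdges p).length) :
    (pathEdges p)[k] = (p[k]'(by simp [pathEdges_length] at hk; omega),
      p[k+1]'(by simp [pathEdges_length] at hk; omega)) := by
  simp only [pathEdges, List.getElem_zip, List.getElem_tail]

theorem edge_mem_pathEdges (p : List V) (k : ℕ) (hk : k + 1 < p.length) :
    (p[k]'(by omega), p[k+1]) ∈ pathEdges p := by
  have h : k < (pathEdges p).length := by rw [pathEdges_length]; omega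
  rw [← pathEdges_getElem p k h]
  exact List.getElem_mem h

section stp
variable {s t : V} {p : List V} (hp : IsStPath s t p)
include hp

theorem stp_ne_nil : p ≠ [] := by
  rintro rfl; exact (by simp : (([]:List V).head? ≠ some s)) hp.2.1

theorem stp_nodup : p.Nodup := hp.1

theorem stp_head (h0 : 0 < p.length) : p[0] = s := by
  have := hp.2.1
  rwa [List.head?_eq_head (stp_ne_nil hp), Option.some_inj, List.head_eq_getElem] at this

theorem stp_last : p[p.length - 1]'(by have := stp_ne_nil hp; cases p <;> simp_all) = t := by
  have := hp.2.2
  rwa [List.getLast?_eq_getLast (stp_ne_nil hp), Option.some_inj, List.getLast_eq_getElem] at this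

theorem stp_ne_t {k : ℕ} (hk : k < p.length - 1) : p[k]'(by omega) ≠ t := by
  intro h
  rw [← stp_last hp] at h
  have := (List.Nodup.getElem_inj_iff hp.1).mp h
  omega

theorem stp_ne_s {k : ℕ} (hk1 : 1 ≤ k) (hk : k < p.length) : p[k] ≠ s := by
  intro h
  rw [← stp_head hp (by omega)] at h
  have := (List.Nodup.getElem_inj_iff hp.1).mp h
  omega

theorem stp_inner {k : ℕ} (hk1 : 1 ≤ k) (hk : k ≤ p.length - 2) : p[k]'(by omega) ∈ innerVerts p := by
  have h3 : 3 ≤ p.length ∨ p.length ≤ 2 := by omega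
  have hlen : k - 1 < p.tail.dropLast.length := by
    simp [List.length_dropLast, List.length_tail]; omega
  have : p.tail.dropLast[k-1] = p[k]'(by omega) := by
    rw [List.getElem_dropLast, List.getElem_tail]
    congr 1; omega
  rw [innerVerts, ← this]
  exact List.getElem_mem hlen

theorem stp_mem_inner {v : V} (hv : v ∈ p) (hvs : v ≠ s) (hvt : v ≠ t) :
    v ∈ innerVerts p := by
  obtain ⟨k, hk, rfl⟩ := List.mem_iff_getElem.mp hv
  have h0 : k ≠ 0 := by
    intro h; subst h; exact hvs (stp_head hp hk)
  have h1 : k ≠ p.length - 1 := by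
    intro h; subst h; exact hvt (stp_last hp)
  exact stp_inner hp (by omega) (by omega)

theorem stp_pos_of_mem {v : V} (hv : v ∈ p) (hvs : v ≠ s) (hvt : v ≠ t) :
    ∃ k, ∃ _ : k < p.length, 1 ≤ k ∧ k ≤ p.length - 2 ∧ p[k] = v := by
  obtain ⟨k, hk, rfl⟩ := List.mem_iff_getElem.mp hv
  have h0 : k ≠ 0 := by
    intro h; subst h; exact hvs (stp_head hp hk)
  have h1 : k ≠ p.length - 1 := by
    intro h; subst h; exact hvt (stp_last hp)
  exact ⟨k, hk, by omega, by omega, rfl⟩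

theorem inner_ne_s (hlen : 1 ≤ p.length) {v : V} (hv : v ∈ innerVerts p) : v ≠ s := by
  rw [innerVerts] at hv
  obtain ⟨k, hk, rfl⟩ := List.mem_iff_getElem.mp hv
  simp only [List.getElem_dropLast, List.getElem_tail]
  simp [List.length_dropLast, List.length_tail] at hk
  exact stp_ne_s hp (by omega) (by omega)

theorem inner_ne_t {v : V} (hv : v ∈ innerVerts p) : v ≠ t := by
  rw [innerVerts] at hv
  obtain ⟨k, hk, rfl⟩ := List.mem_iff_getElem.mp hv
  simp only [List.getElem_dropLast, List.getElem_tail]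
  simp [List.length_dropLast, List.length_tail] at hk
  exact stp_ne_t hp (by omega)

end stp
end Ex19

namespace Ex19
open List Classical

variable {V : Type*} {m : ℕ} {s t : V} {F : Fin (m+1) → Set (V × V)}

/-- The set of essential indices assigned to path `q`, as a `Finset`. -/
noncomputable def Aq (R : Regimentation s t F) (q : List V) : Finset (Fin (m+1)) :=
  Finset.univ.filter (fun i => i ∈ R.ess ∧ R.I i = q)

theorem mem_Aq {R : Regimentation s t F} {q : List V} {i : Fin (m+1)} :
    i ∈ Aq R q ↔ i ∈ R.ess ∧ R.I i = q := by simp [Aq]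

theorem Aq_card (R : Regimentation s t F) {q : List V} (hq : q ∈ R.paths) :
    (Aq R q).card = q.length - 2 := by
  have h := R.I_count q hq
  have : {i | i ∈ R.ess ∧ R.I i = q} = ↑(Aq R q) := by ext i; simp [mem_Aq]
  rw [this, Set.ncard_coe_finset, pathEdges_length] at h
  omega

theorem Aq_disj {R : Regimentation s t F} {q q' : List V} {i : Fin (m+1)}
    (h : i ∈ Aq R q) (h' : i ∈ Aq R q') : q = q' := by
  rw [mem_Aq] at h h'; rw [← h.2, h'.2]

theorem path_len (R : Regimentation s t F) {q : List V} (hq : q ∈ R.paths) :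
    3 ≤ q.length := by
  obtain ⟨i, hi, hiq⟩ := R.I_surj q hq
  have h1 : i ∈ Aq R q := mem_Aq.mpr ⟨hi, hiq⟩
  have h2 : 1 ≤ (Aq R q).card := Finset.card_pos.mpr ⟨i, h1⟩
  have := Aq_card R hq
  -- need q.length ≥ 1 separately? q.length - 2 ≥ 1 gives length ≥ 3
  omega

theorem edge_mem_F (R : Regimentation s t F) {q : List V} {i : Fin (m+1)}
    (hi : i ∈ Aq R q) {k : ℕ} (hk : k + 1 < q.length) :
    (q[k]'(by omega), q[k+1]) ∈ F i := by
  rw [mem_Aq] at hi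
  have := R.I_rep i hi.1
  rw [hi.2] at this
  exact this _ (edge_mem_pathEdges q k hk)

theorem Aq_nonempty (R : Regimentation s t F) {q : List V} (hq : q ∈ R.paths) :
    ∃ i, i ∈ Aq R q := by
  obtain ⟨i, hi, hiq⟩ := R.I_surj q hq
  exact ⟨i, mem_Aq.mpr ⟨hi, hiq⟩⟩

theorem path_unique (R : Regimentation s t F) {q q' : List V} (hq : q ∈ R.paths)
    (hq' : q' ∈ R.paths) {v : V} (hv : v ∈ q) (hv' : v ∈ q') (hvs : v ≠ s) (hvt : v ≠ t) :
    q = q' := by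
  by_contra hne
  exact R.intDisj q hq q' hq' hne v
    (stp_mem_inner (R.isPath q hq) hv hvs hvt)
    (stp_mem_inner (R.isPath q' hq') hv' hvs hvt)

theorem s_ne_t (R : Regimentation s t F) : s ≠ t := by
  obtain ⟨q, hq, -⟩ := R.cover s
  have hp := R.isPath q hq
  have h3 := path_len R hq
  have := stp_ne_t hp (k := 0) (by omega)
  rwa [stp_head hp (by omega)] at this

end Ex19

namespace Ex19
set_option maxHeartbeats 1600000
open List

variable {V : Type*} {m : ℕ} {s t : V} {F : Fin (m+1) → Set (V × V)}

theorem getElem_idx_congr (l : List V) {i j : ℕ} (h : i = j) {hi : i < l.length} :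
    l[i] = l[j]'(h ▸ hi) := by subst h; rfl

theorem RB (R : Regimentation s t F) (hno : ¬ HasRainbowStPath s t F)
    {q1 q2 : List V} (hq1 : q1 ∈ R.paths) (hq2 : q2 ∈ R.paths)
    {a b : ℕ} (ha : a + 1 < q1.length) (hb1 : 1 ≤ b) (hb2 : b < q2.length)
    {j : Fin (m+1)} (hj : (q1[a]'(by omega), q2[b]) ∈ F j)
    (S1 S2 : Finset (Fin (m+1)))
    (hS1c : S1.card = a) (hS2c : S2.card = q2.length - 1 - b)
    (hS1 : S1 ⊆ Aq R q1) (hS2 : S2 ⊆ Aq R q2)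
    (hdisj : Disjoint S1 S2) (hj1 : j ∉ S1) (hj2 : j ∉ S2)
    (hvert : ∀ x ∈ q1.take (a+1), x ∉ q2.drop b) : False := by
  classical
  have hp1 := R.isPath q1 hq1
  have hp2 := R.isPath q2 hq2
  have hl1 : 3 ≤ q1.length := path_len R hq1
  have hl2 : 3 ≤ q2.length := path_len R hq2
  set p := q1.take (a+1) ++ q2.drop b with hpdef
  have htlen : (q1.take (a+1)).length = a + 1 := by
    simp [List.length_take]; omega
  have hplen : p.length = a + 1 + (q2.length - b) := by
    simp only [hpdef, List.length_append, List.length_drop, htlen]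
  have hgetl : ∀ k : ℕ, ∀ (hk : k ≤ a) (h : k < p.length), p[k] = q1[k]'(by omega) := by
    intro k hk h
    exact Eq.trans (List.getElem_append_left (by rw [htlen]; omega)) List.getElem_take
  have hgetr : ∀ k : ℕ, ∀ (hk : a + 1 ≤ k) (h : k < p.length),
      p[k] = q2[b + (k - (a+1))]'(by omega) := by
    intro k hk h
    refine Eq.trans (List.getElem_append_right (by rw [htlen]; omega)) ?_
    refine Eq.trans List.getElem_drop ?_
    exact getElem_idx_congr q2 (by rw [htlen])
  -- p is an s-t path
  have hpne : p ≠ [] := by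
    intro h
    have := congrArg List.length h
    rw [hplen] at this
    simp at this
  have hstp : IsStPath s t p := by
    refine ⟨?_, ?_, ?_⟩
    · rw [hpdef, List.nodup_append]
      exact ⟨(List.take_sublist _ _).nodup hp1.1, (List.drop_sublist _ _).nodup hp2.1,
        fun x hx y hy hxy => hvert x hx (hxy ▸ hy)⟩
    · rw [List.head?_eq_head hpne, List.head_eq_getElem]
      rw [hgetl 0 (by omega) (by omega), stp_head hp1 (by omega)]
    · have h1 : p[p.length - 1]'(by omega) = t := by
        rw [hgetr (p.length - 1) (by omega) (by omega),
          getElem_idx_congr q2 (show b + (p.length - 1 - (a+1)) = q2.length - 1 by omega)]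
        exact stp_last hp2
      rw [List.getLast?_eq_getLast hpne, List.getLast_eq_getElem, h1]
  have hN : (pathEdges p).length = a + (q2.length - b) := by
    rw [pathEdges_length]; omega
  set c : ℕ := q2.length - 1 - b with hc
  have he1 : ∀ x : Fin a, (S1.orderIsoOfFin hS1c x : Fin (m+1)) ∈ S1 :=
    fun x => (S1.orderIsoOfFin hS1c x).2
  have he2 : ∀ x : Fin c, (S2.orderIsoOfFin hS2c x : Fin (m+1)) ∈ S2 :=
    fun x => (S2.orderIsoOfFin hS2c x).2
  set g : Fin (pathEdges p).length → Fin (m+1) := fun k =>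
    if h : (k : ℕ) < a then (S1.orderIsoOfFin hS1c ⟨k, h⟩ : Fin (m+1))
    else if h2 : (k : ℕ) = a then j
    else (S2.orderIsoOfFin hS2c ⟨(k : ℕ) - (a+1), by
      have hkb : (k : ℕ) < a + (q2.length - b) := lt_of_lt_of_le k.isLt (le_of_eq hN)
      omega⟩ : Fin (m+1)) with hg
  refine hno ⟨p, hstp, g, ?_, ?_⟩
  · -- injectivity
    intro k k' hkk
    rw [hg] at hkk
    simp only at hkk
    by_cases h : (k:ℕ) < a <;> by_cases h' : (k':ℕ) < a
    · rw [dif_pos h, dif_pos h'] at hkk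
      have := (S1.orderIsoOfFin hS1c).injective (Subtype.ext hkk)
      ext
      simpa using congrArg Fin.val this
    · rw [dif_pos h, dif_neg h'] at hkk
      by_cases h2 : (k':ℕ) = a
      · rw [dif_pos h2] at hkk
        exact absurd (hkk ▸ he1 ⟨k, h⟩) hj1
      · rw [dif_neg h2] at hkk
        have m1 := he1 ⟨k, h⟩
        rw [hkk] at m1
        exact absurd m1 (Finset.disjoint_right.mp hdisj (he2 _))
    · rw [dif_neg h, dif_pos h'] at hkk
      by_cases h2 : (k:ℕ) = a
      · rw [dif_pos h2] at hkk
        exact absurd (hkk.symm ▸ he1 ⟨k', h'⟩) hj1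
      · rw [dif_neg h2] at hkk
        have m1 := he1 ⟨k', h'⟩
        rw [← hkk] at m1
        exact absurd m1 (Finset.disjoint_right.mp hdisj (he2 _))
    · rw [dif_neg h, dif_neg h'] at hkk
      by_cases h2 : (k:ℕ) = a <;> by_cases h2' : (k':ℕ) = a
      · ext; rw [h2, h2']
      · rw [dif_pos h2, dif_neg h2'] at hkk
        exact absurd (hkk ▸ he2 _) hj2
      · rw [dif_neg h2, dif_pos h2'] at hkk
        exact absurd (hkk.symm ▸ he2 _) hj2
      · rw [dif_neg h2, dif_neg h2'] at hkk
        have := (S2.orderIsoOfFin hS2c).injective (Subtype.ext hkk)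
        have h3 := congrArg Fin.val this
        simp only at h3
        ext
        omega
  · -- membership
    intro k
    have hke := pathEdges_length p
    have hkb : (k : ℕ) < a + (q2.length - b) := lt_of_lt_of_le k.isLt (le_of_eq hN)
    have hklt : (k : ℕ) < (pathEdges p).length := k.isLt
    have hedge : (pathEdges p).get k = (p[(k:ℕ)]'(by omega),
        p[(k:ℕ)+1]'(by omega)) := by
      rw [List.get_eq_getElem]
      exact pathEdges_getElem p k hklt
    rw [hg]
    simp only
    by_cases h : (k:ℕ) < a
    · rw [dif_pos h, hedge]
      rw [hgetl k (by omega) (by omega), hgetl ((k:ℕ)+1) (by omega) (by omega)]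
      exact edge_mem_F R (hS1 (he1 ⟨k, h⟩)) (by omega)
    · by_cases h2 : (k:ℕ) = a
      · rw [dif_neg h, dif_pos h2, hedge]
        rw [hgetl k (by omega) (by omega), hgetr ((k:ℕ)+1) (by omega) (by omega)]
        rw [getElem_idx_congr q1 h2, getElem_idx_congr q2
          (show b + ((k:ℕ) + 1 - (a+1)) = b by omega)]
        exact hj
      · rw [dif_neg h, dif_neg h2, hedge]
        rw [hgetr k (by omega) (by omega), hgetr ((k:ℕ)+1) (by omega) (by omega)]
        rw [getElem_idx_congr q2
          (show b + ((k:ℕ) + 1 - (a+1)) = (b + ((k:ℕ) - (a+1))) + 1 by omega)]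
        exact edge_mem_F R (hS2 (he2 _)) (by omega)

end Ex19

namespace Ex19
open List

variable {V : Type*} {m : ℕ} {s t : V} {F : Fin (m+1) → Set (V × V)}

theorem choose_subset (A : Finset (Fin (m+1))) (j : Fin (m+1)) {n : ℕ}
    (h : n + 1 ≤ A.card) : ∃ S, S ⊆ A ∧ S.card = n ∧ j ∉ S := by
  have h1 : n ≤ (A.erase j).card := by
    have := Finset.pred_card_le_card_erase (s := A) (a := j)
    omega
  obtain ⟨S, hS, hc⟩ := Finset.exists_subset_card_eq h1
  exact ⟨S, hS.trans (Finset.erase_subset _ _), hc, fun hj => Finset.notMem_erase j A (hS hj)⟩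

theorem choose_two (A : Finset (Fin (m+1))) (j : Fin (m+1)) {n1 n2 : ℕ}
    (h : n1 + n2 + 1 ≤ A.card) :
    ∃ S1 S2, S1 ⊆ A ∧ S2 ⊆ A ∧ S1.card = n1 ∧ S2.card = n2 ∧
      Disjoint S1 S2 ∧ j ∉ S1 ∧ j ∉ S2 := by
  obtain ⟨T, hT, hTc, hjT⟩ := choose_subset A j (n := n1 + n2) h
  obtain ⟨S1, hS1, hS1c⟩ := Finset.exists_subset_card_eq (s := T) (n := n1) (by omega)
  refine ⟨S1, T \ S1, hS1.trans hT, (Finset.sdiff_subset).trans hT, hS1c, ?_,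
    Finset.disjoint_sdiff, fun hj => hjT (hS1 hj), fun hj => hjT (Finset.sdiff_subset hj)⟩
  rw [Finset.card_sdiff_of_subset hS1]
  omega

theorem mem_take_of_getElem {q : List V} {b n : ℕ} (hb : b < n) (hbl : b < q.length) :
    q[b] ∈ q.take n := by
  have hlen : b < (q.take n).length := by simp [List.length_take]; omega
  have : (q.take n)[b] = q[b] := List.getElem_take
  rw [← this]
  exact List.getElem_mem hlen

theorem take_drop_disj {q : List V} (hq : q.Nodup) {a b : ℕ} (h : a ≤ b) :
    ∀ x ∈ q.take a, x ∉ q.drop b := by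
  intro x hx hx'
  obtain ⟨i, hi, hiq⟩ := List.mem_iff_getElem.mp hx
  obtain ⟨i', hm, hiq'⟩ := List.mem_drop_iff_getElem.mp hx'
  rw [List.getElem_take] at hiq
  have hilen : i < q.length := by
    have := (List.length_take : (q.take a).length = _)
    simp [List.length_take] at hi
    omega
  have : q[i] = q[b + i'] := by rw [hiq, hiq']
  have := (List.Nodup.getElem_inj_iff hq).mp this
  simp [List.length_take] at hi
  omega

theorem cross_disj (R : Regimentation s t F) {q1 q2 : List V}
    (hq1 : q1 ∈ R.paths) (hq2 : q2 ∈ R.paths) (hne : q1 ≠ q2) {a b : ℕ}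
    (ha : a ≤ q1.length - 2) (hb1 : 1 ≤ b) :
    ∀ x ∈ q1.take (a+1), x ∉ q2.drop b := by
  have hp1 := R.isPath q1 hq1
  have hp2 := R.isPath q2 hq2
  have hl1 := path_len R hq1
  have hl2 := path_len R hq2
  intro x hx hx'
  obtain ⟨k, hk, hkq⟩ := List.mem_iff_getElem.mp hx
  rw [List.getElem_take] at hkq
  simp [List.length_take] at hk
  obtain ⟨i', hm, hiq'⟩ := List.mem_drop_iff_getElem.mp hx'
  have hxs : x ≠ s := by
    rw [← hiq']
    exact stp_ne_s hp2 (by omega) (by omega)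
  have hk0 : k ≠ 0 := by
    intro h
    subst h
    rw [stp_head hp1 (by omega)] at hkq
    exact hxs hkq.symm
  have hxt : x ≠ t := by
    rw [← hkq]
    exact stp_ne_t hp1 (by omega)
  have hx1 : x ∈ innerVerts q1 := stp_mem_inner hp1 (hkq ▸ List.getElem_mem (by omega)) hxs hxt
  have hx2 : x ∈ innerVerts q2 := stp_mem_inner hp2 (hiq' ▸ List.getElem_mem (by omega)) hxs hxt
  exact R.intDisj q1 hq1 q2 hq2 hne x hx1 hx2

theorem SL_b (R : Regimentation s t F) (hno : ¬ HasRainbowStPath s t F)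
    {q : List V} (hq : q ∈ R.paths) {v : V} {j : Fin (m+1)} (hj : (s, v) ∈ F j)
    (hv : v ∈ q) (hvs : v ≠ s) (hvt : v ≠ t) :
    j ∈ Aq R q ∧ q[1]'(by have := path_len R hq; omega) = v := by
  have hp := R.isPath q hq
  have hl := path_len R hq
  have hcard := Aq_card R hq
  obtain ⟨k, hklen, hk1, hk2, hkv⟩ := stp_pos_of_mem hp hv hvs hvt
  have hk : k = 1 := by
    by_contra hne
    obtain ⟨S2, hS2A, hS2c, hjS2⟩ := choose_subset (Aq R q) j
      (n := q.length - 1 - k) (by omega)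
    exact RB R hno hq hq (a := 0) (b := k) (by omega) (by omega) (by omega)
      (j := j) (by rw [stp_head hp (by omega), hkv]; exact hj)
      ∅ S2 (by simp) hS2c (by simp) hS2A (by simp) (by simp) hjS2
      (take_drop_disj hp.1 (by omega))
  subst hk
  refine ⟨?_, hkv⟩
  by_contra hjA
  exact RB R hno hq hq (a := 0) (b := 1) (by omega) (by omega) (by omega)
    (j := j) (by rw [stp_head hp (by omega), hkv]; exact hj)
    ∅ (Aq R q) (by simp) (by omega) (by simp) (le_refl _) (by simp) (by simp) hjA
    (take_drop_disj hp.1 (by omega))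

theorem SL_c (R : Regimentation s t F) (hno : ¬ HasRainbowStPath s t F)
    {q : List V} (hq : q ∈ R.paths) {u : V} {j : Fin (m+1)} (hj : (u, t) ∈ F j)
    (hu : u ∈ q) (hus : u ≠ s) (hut : u ≠ t) :
    j ∈ Aq R q ∧ q[q.length - 2]'(by have := path_len R hq; omega) = u := by
  have hp := R.isPath q hq
  have hl := path_len R hq
  have hcard := Aq_card R hq
  obtain ⟨k, hklen, hk1, hk2, hku⟩ := stp_pos_of_mem hp hu hus hut
  have hedge : (q[k], q[q.length - 1]'(by omega)) ∈ F j := by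
    rw [stp_last hp, hku]; exact hj
  have hk : k = q.length - 2 := by
    by_contra hne
    obtain ⟨S1, hS1A, hS1c, hjS1⟩ := choose_subset (Aq R q) j (n := k) (by omega)
    exact RB R hno hq hq (a := k) (b := q.length - 1) (by omega) (by omega) (by omega)
      (j := j) hedge
      S1 ∅ hS1c (by simp only [Finset.card_empty]; omega) hS1A (by simp) (by simp) hjS1 (by simp)
      (take_drop_disj hp.1 (by omega))
  subst hk
  refine ⟨?_, hku⟩
  by_contra hjA
  exact RB R hno hq hq (a := q.length - 2) (b := q.length - 1) (by omega) (by omega)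
    (by omega) (j := j) hedge
    (Aq R q) ∅ (by omega) (by simp only [Finset.card_empty]; omega) (le_refl _) (by simp)
    (by simp) hjA (by simp)
    (take_drop_disj hp.1 (by omega))

theorem SL_step (R : Regimentation s t F) (hno : ¬ HasRainbowStPath s t F)
    {q : List V} (hq : q ∈ R.paths) {i : Fin (m+1)} (hi : i ∈ Aq R q) {a : ℕ}
    (ha1 : 1 ≤ a) (ha2 : a ≤ q.length - 2)
    {v : V} (hv : (q[a]'(by have := path_len R hq; omega), v) ∈ F i)
    (hvs : v ≠ s) (hvt : v ≠ t) (hvtake : v ∉ q.take (a+1)) :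
    (∃ h : a + 1 < q.length, q[a+1] = v) ∨ (v ∉ q ∧ a = q.length - 2) := by
  have hp := R.isPath q hq
  have hl := path_len R hq
  have hcard := Aq_card R hq
  obtain ⟨q'', hq'', hvq''⟩ := R.cover v
  by_cases hvq : v ∈ q
  · -- v on the same path
    left
    obtain ⟨b, hblen, hb1, hb2, hbv⟩ := stp_pos_of_mem hp hvq hvs hvt
    have hab : a + 1 ≤ b := by
      rcases Nat.lt_or_ge b (a+1) with h | h
      · exact absurd (hbv ▸ mem_take_of_getElem h hblen) hvtake
      · exact h
    have hb : b = a + 1 := by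
      by_contra hne
      obtain ⟨S1, S2, hS1A, hS2A, hS1c, hS2c, hdisj, hjS1, hjS2⟩ :=
        choose_two (Aq R q) i (n1 := a) (n2 := q.length - 1 - b) (by omega)
      exact RB R hno hq hq (a := a) (b := b) (by omega) (by omega) (by omega)
        (j := i) (by rw [hbv]; exact hv)
        S1 S2 hS1c hS2c hS1A hS2A hdisj hjS1 hjS2 (take_drop_disj hp.1 (by omega))
    subst hb
    exact ⟨by omega, hbv⟩
  · -- v is on another path
    right
    have hqne : q ≠ q'' := by
      intro h; exact hvq (h ▸ hvq'')
    have hinAq : i ∉ Aq R q'' := by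
      intro h; exact hqne (Aq_disj hi h)
    refine ⟨hvq, ?_⟩
    by_contra hne
    have hp'' := R.isPath q'' hq''
    have hl'' := path_len R hq''
    have hcard'' := Aq_card R hq''
    obtain ⟨b, hblen, hb1, hb2, hbv⟩ := stp_pos_of_mem hp'' hvq'' hvs hvt
    obtain ⟨S1, hS1A, hS1c, hjS1⟩ := choose_subset (Aq R q) i (n := a) (by omega)
    obtain ⟨S2, hS2A, hS2c⟩ := Finset.exists_subset_card_eq (s := Aq R q'')
      (n := q''.length - 1 - b) (by omega)
    have hdisj : Disjoint S1 S2 := by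
      rw [Finset.disjoint_left]
      intro x hx1 hx2
      exact hqne (Aq_disj (hS1A hx1) (hS2A hx2))
    exact RB R hno hq hq'' (a := a) (b := b) (by omega) (by omega) (by omega)
      (j := i) (by rw [hbv]; exact hv)
      S1 S2 hS1c hS2c hS1A hS2A hdisj hjS1 (fun h => hinAq (hS2A h))
      (cross_disj R hq hq'' hqne (by omega) (by omega))

end Ex19

namespace Ex19
open List

variable {V : Type*} {m : ℕ} {s t : V}

theorem CIL {F F' : Fin (m+1) → Set (V × V)} (R : Regimentation s t F)
    (R' : Regimentation s t F') (hno : ¬ HasRainbowStPath s t F)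
    (hno' : ¬ HasRainbowStPath s t F') {q q' : List V}
    (hq : q ∈ R.paths) (hq' : q' ∈ R'.paths) {i : Fin (m+1)}
    (hi : i ∈ Aq R q) (hi' : i ∈ Aq R' q') (hFF : F i = F' i) : q = q' := by
  have hp := R.isPath q hq
  have hp' := R'.isPath q' hq'
  have hl := path_len R hq
  have hl' := path_len R' hq'
  have claim : ∀ a, ∀ _ : a < q.length, ∃ _ : a < q'.length,
      ∀ k, ∀ hk : k ≤ a, q[k]'(by omega) = q'[k]'(by omega) := by
    intro a
    induction a with
    | zero =>
      intro _
      refine ⟨by omega, ?_⟩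
      intro k hk
      have hk0 : k = 0 := by omega
      subst hk0
      rw [stp_head hp (by omega), stp_head hp' (by omega)]
    | succ a IH =>
      intro ha
      obtain ⟨hlen', heq⟩ := IH (by omega)
      have hqa : q[a]'(by omega) = q'[a] := heq a le_rfl
      have hqat : q[a]'(by omega) ≠ t := stp_ne_t hp (by omega)
      have hlen'2 : a + 1 < q'.length := by
        have h1 : q'[a] ≠ t := hqa ▸ hqat
        have h2 : a ≠ q'.length - 1 := by
          intro h
          exact h1 (by rw [getElem_idx_congr q' h]; exact stp_last hp')
        omega
      have hedge : (q[a]'(by omega), q[a+1]) ∈ F i := edge_mem_F R hi (by omega)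
      have hedge' : (q[a]'(by omega), q[a+1]) ∈ F' i := hFF ▸ hedge
      have hvs : q[a+1] ≠ s := stp_ne_s hp (by omega) (by omega)
      have hextend : q'.length > a + 1 → q'[a+1]'(by omega) = q[a+1] →
          ∃ _ : a + 1 < q'.length, ∀ k, ∀ hk : k ≤ a + 1,
            q[k]'(by omega) = q'[k]'(by omega) := by
        intro h1 h2
        refine ⟨h1, ?_⟩
        intro k hk
        rcases Nat.lt_or_ge k (a+1) with h | h
        · exact heq k (by omega)
        · have : k = a + 1 := by omega
          subst this
          exact h2.symm
      rcases Nat.eq_zero_or_pos a with ha0 | ha1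
      · -- a = 0 : use SL_b
        subst ha0
        have hvt : q[1] ≠ t := stp_ne_t hp (by omega)
        have hsv : (s, q[1]) ∈ F' i := by
          rw [← stp_head hp (by omega)]
          exact hedge'
        obtain ⟨q2, hq2, hvq2⟩ := R'.cover (q[1])
        obtain ⟨hiq2, hq21⟩ := SL_b R' hno' hq2 hsv hvq2 hvs hvt
        have : q2 = q' := Aq_disj hiq2 hi'
        subst this
        exact hextend (by omega) hq21
      · by_cases hvt : q[a+1] = t
        · -- next vertex is t : use SL_c on R'
          have hat : a + 1 = q.length - 1 := by
            have h2 : q[a+1] = q[q.length - 1]'(by omega) := by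
              rw [hvt, stp_last hp]
            exact (List.Nodup.getElem_inj_iff hp.1).mp h2
          have hedge'2 : (q'[a], t) ∈ F' i := by
            rw [← hqa, ← hvt]
            exact hedge'
          have hus : q'[a] ≠ s := stp_ne_s hp' (by omega) (by omega)
          have hut : q'[a] ≠ t := hqa ▸ hqat
          obtain ⟨-, hpen⟩ := SL_c R' hno' hq' hedge'2 (List.getElem_mem (by omega)) hus hut
          have ha' : a = q'.length - 2 := ((List.Nodup.getElem_inj_iff hp'.1).mp hpen).symm
          refine hextend (by omega) ?_
          rw [getElem_idx_congr q' (show a + 1 = q'.length - 1 by omega)]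
          rw [stp_last hp', hvt]
        · -- next vertex is an inner vertex
          have hstep_edge : (q'[a], q[a+1]) ∈ F' i := by
            rw [← hqa]; exact hedge'
          have hvtake : q[a+1] ∉ q'.take (a+1) := by
            intro hmem
            obtain ⟨k, hk, hkq⟩ := List.mem_iff_getElem.mp hmem
            have hklen : k < a + 1 := by
              simp [List.length_take] at hk
              omega
            rw [List.getElem_take] at hkq
            have : q[k]'(by omega) = q[a+1] := by
              rw [heq k (by omega), hkq]
            have := (List.Nodup.getElem_inj_iff hp.1).mp this
            omega
          rcases SL_step R' hno' hq' hi' (a := a) (by omega) (by omega)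
              hstep_edge hvs hvt hvtake with ⟨hb, hq'a1⟩ | ⟨hvnq', ha'⟩
          · exact hextend (by omega) hq'a1
          · -- dead branch : q would end at a+1
            exfalso
            have hedge3 : (q'[a], q'[a+1]'(by omega)) ∈ F' i :=
              edge_mem_F R' hi' (by omega)
            have hlast' : q'[a+1]'(by omega) = t := by
              rw [getElem_idx_congr q' (show a + 1 = q'.length - 1 by omega)]
              exact stp_last hp'
            have hedge4 : (q[a]'(by omega), t) ∈ F i := by
              rw [hqa, ← hlast', ← hFF] at *
              exact hedge3
            have hus : q[a]'(by omega) ≠ s := stp_ne_s hp (by omega) (by omega)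
            obtain ⟨-, hpen⟩ := SL_c R hno hq hedge4 (List.getElem_mem (by omega)) hus hqat
            have : a = q.length - 2 := ((List.Nodup.getElem_inj_iff hp.1).mp hpen).symm
            apply hvt
            rw [getElem_idx_congr q (show a + 1 = q.length - 1 by omega)]
            exact stp_last hp
  obtain ⟨hlen', heq⟩ := claim (q.length - 1) (by omega)
  have hlast : q[q.length - 1]'(by omega) = q'[q.length - 1] := heq _ le_rfl
  rw [stp_last hp] at hlast
  have h2 : q'[q.length - 1] = q'[q'.length - 1]'(by omega) := by
    rw [stp_last hp', ← hlast]
  have h3 : q.length - 1 = q'.length - 1 := (List.Nodup.getElem_inj_iff hp'.1).mp h2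
  apply List.ext_getElem (by omega)
  intro k h1 h1'
  exact heq k (by omega)

end Ex19

namespace Ex19
open List

variable {V : Type*} {m : ℕ} {s t : V}

theorem agree_of_ne {G H : Fin (m+1) → Set (V × V)}
    (hagree : ∀ i : Fin m, G i.castSucc = H i.castSucc) {i : Fin (m+1)}
    (h : i ≠ Fin.last m) : G i = H i := by
  obtain ⟨j, rfl⟩ : ∃ j : Fin m, i = j.castSucc := by
    rcases Fin.eq_castSucc_or_eq_last i with h' | h'
    · exact h'
    · exact absurd h' h
  exact hagree j

/-- Transfer the regimentation `RH` of `H` to `G` when the differing index is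
inessential for `RH`. -/
def transferReg {G H : Fin (m+1) → Set (V × V)}
    (hagree : ∀ i : Fin m, G i.castSucc = H i.castSucc)
    (RH : Regimentation s t H) (hne : Fin.last m ∉ RH.ess) :
    Regimentation s t G where
  paths := RH.paths
  isPath := RH.isPath
  intDisj := RH.intDisj
  cover := RH.cover
  ess := RH.ess
  I := RH.I
  I_mem := RH.I_mem
  I_surj := RH.I_surj
  I_rep := by
    intro i hi e he
    have hine : i ≠ Fin.last m := fun h => hne (h ▸ hi)
    rw [agree_of_ne hagree hine]
    exact RH.I_rep i hi e he
  I_count := RH.I_count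

theorem T1 {G H : Fin (m+1) → Set (V × V)}
    (hagree : ∀ i : Fin m, G i.castSucc = H i.castSucc)
    (RG : Regimentation s t G) (RH : Regimentation s t H)
    (hnoG : ¬ HasRainbowStPath s t G)
    (hG : Fin.last m ∈ RG.ess) : Fin.last m ∈ RH.ess := by
  by_contra hne
  set RH' := transferReg hagree RH hne with hRH'
  set P := RG.I (Fin.last m) with hP
  have hPmem : P ∈ RG.paths := RG.I_mem _ hG
  have hp := RG.isPath P hPmem
  have hl := path_len RG hPmem
  have hlastA : Fin.last m ∈ Aq RG P := mem_Aq.mpr ⟨hG, rfl⟩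
  have hedge : (P[0]'(by omega), P[1]) ∈ G (Fin.last m) := edge_mem_F RG hlastA (by omega)
  rw [stp_head hp (by omega)] at hedge
  have hvs : P[1] ≠ s := stp_ne_s hp (by omega) (by omega)
  have hvt : P[1] ≠ t := stp_ne_t hp (by omega)
  obtain ⟨q, hq, hvq⟩ := RH'.cover (P[1])
  obtain ⟨hAq, -⟩ := SL_b RH' hnoG hq hedge hvq hvs hvt
  exact hne (mem_Aq.mp hAq).1

theorem T2a {G H : Fin (m+1) → Set (V × V)}
    (hagree : ∀ i : Fin m, G i.castSucc = H i.castSucc)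
    (RG : Regimentation s t G) (RH : Regimentation s t H)
    (hnoG : ¬ HasRainbowStPath s t G) (hnoH : ¬ HasRainbowStPath s t H)
    (hG : Fin.last m ∈ RG.ess) (hH : Fin.last m ∈ RH.ess)
    {i : Fin (m+1)} (hiA : i ∈ Aq RG (RG.I (Fin.last m))) (hine : i ≠ Fin.last m) :
    RH.I (Fin.last m) = RG.I (Fin.last m) := by
  set P := RG.I (Fin.last m) with hP
  have hPmem : P ∈ RG.paths := RG.I_mem _ hG
  have hp := RG.isPath P hPmem
  have hl := path_len RG hPmem
  have hGHi : G i = H i := agree_of_ne hagree hine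
  have hedge : (P[0]'(by omega), P[1]) ∈ G i := edge_mem_F RG hiA (by omega)
  rw [stp_head hp (by omega)] at hedge
  have hedgeH : (s, P[1]) ∈ H i := hGHi ▸ hedge
  have hvs : P[1] ≠ s := stp_ne_s hp (by omega) (by omega)
  have hvt : P[1] ≠ t := stp_ne_t hp (by omega)
  obtain ⟨q, hq, hvq⟩ := RH.cover (P[1])
  obtain ⟨hAq, -⟩ := SL_b RH hnoH hq hedgeH hvq hvs hvt
  have hPq : P = q := CIL RG RH hnoG hnoH hPmem hq hiA hAq hGHi
  have hPRH : P ∈ RH.paths := hPq ▸ hq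
  by_cases hlastB : Fin.last m ∈ Aq RH P
  · exact (mem_Aq.mp hlastB).2
  · exfalso
    have hsub : Aq RH P ⊆ Aq RG P := by
      intro i'' hi''
      have hne'' : i'' ≠ Fin.last m := fun h => hlastB (h ▸ hi'')
      have hpP' := RH.isPath P hPRH
      have hedge'' : (P[0]'(by omega), P[1]) ∈ H i'' := edge_mem_F RH hi'' (by omega)
      rw [stp_head hpP' (by omega)] at hedge''
      have hedgeG'' : (s, P[1]) ∈ G i'' := (agree_of_ne hagree hne'') ▸ hedge''
      exact (SL_b RG hnoG hPmem hedgeG'' (List.getElem_mem (by omega)) hvs hvt).1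
    have hcards : (Aq RG P).card ≤ (Aq RH P).card := by
      rw [Aq_card RG hPmem, Aq_card RH hPRH]
    have := Finset.eq_of_subset_of_card_le hsub hcards
    rw [this] at hlastB
    exact hlastB (mem_Aq.mpr ⟨hG, rfl⟩)

theorem T2 {G H : Fin (m+1) → Set (V × V)}
    (hagree : ∀ i : Fin m, G i.castSucc = H i.castSucc)
    (RG : Regimentation s t G) (RH : Regimentation s t H)
    (hnoG : ¬ HasRainbowStPath s t G) (hnoH : ¬ HasRainbowStPath s t H)
    (hG : Fin.last m ∈ RG.ess) (hH : Fin.last m ∈ RH.ess) :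
    RG.I (Fin.last m) = RH.I (Fin.last m) := by
  have hagree' : ∀ i : Fin m, H i.castSucc = G i.castSucc := fun i => (hagree i).symm
  by_cases h1 : ∃ i ∈ Aq RG (RG.I (Fin.last m)), i ≠ Fin.last m
  · obtain ⟨i, hiA, hine⟩ := h1
    exact (T2a hagree RG RH hnoG hnoH hG hH hiA hine).symm
  · by_cases h2 : ∃ i ∈ Aq RH (RH.I (Fin.last m)), i ≠ Fin.last m
    · obtain ⟨i, hiA, hine⟩ := h2
      exact T2a hagree' RH RG hnoH hnoG hH hG hiA hine
    · -- both assigned paths have length 3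
      push_neg at h1 h2
      set P := RG.I (Fin.last m) with hPdef
      set P' := RH.I (Fin.last m) with hP'def
      have hPmem : P ∈ RG.paths := RG.I_mem _ hG
      have hP'mem : P' ∈ RH.paths := RH.I_mem _ hH
      have hp := RG.isPath P hPmem
      have hp' := RH.isPath P' hP'mem
      have hl := path_len RG hPmem
      have hl' := path_len RH hP'mem
      have hlastP : Fin.last m ∈ Aq RG P := mem_Aq.mpr ⟨hG, rfl⟩
      have hlastP' : Fin.last m ∈ Aq RH P' := mem_Aq.mpr ⟨hH, rfl⟩
      set x := P[1]'(by omega) with hx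
      have hxs : x ≠ s := stp_ne_s hp (by omega) (by omega)
      have hxt : x ≠ t := stp_ne_t hp (by omega)
      obtain ⟨qh, hqh, hxqh⟩ := RH.cover x
      have hqhP' : qh = P' := by
        by_contra hqhne
        obtain ⟨i, hiqh⟩ := Aq_nonempty RH hqh
        have hine : i ≠ Fin.last m := by
          intro h
          exact hqhne (Aq_disj (h ▸ hiqh) hlastP')
        have hpqh := RH.isPath qh hqh
        have hlqh := path_len RH hqh
        have hedge : (qh[0]'(by omega), qh[1]) ∈ H i := edge_mem_F RH hiqh (by omega)
        rw [stp_head hpqh (by omega)] at hedge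
        have hedgeG : (s, qh[1]) ∈ G i := (agree_of_ne hagree hine) ▸ hedge
        have hws : qh[1] ≠ s := stp_ne_s hpqh (by omega) (by omega)
        have hwt : qh[1] ≠ t := stp_ne_t hpqh (by omega)
        obtain ⟨r, hr, hwr⟩ := RG.cover (qh[1])
        obtain ⟨hAr, -⟩ := SL_b RG hnoG hr hedgeG hwr hws hwt
        have hqhr : qh = r := CIL RH RG hnoH hnoG hqh hr hiqh hAr
          ((agree_of_ne hagree hine).symm)
        have hqhRG : qh ∈ RG.paths := hqhr ▸ hr
        -- x lies on both qh and P in RG, so qh = P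
        have hqhP : qh = P := path_unique RG hqhRG hPmem hxqh
          (List.getElem_mem (by omega)) hxs hxt
        -- now P ∈ RH.paths, P ≠ P'
        have hPRH : P ∈ RH.paths := hqhP ▸ hqh
        have hPP' : P ≠ P' := fun h => hqhne (hqhP.trans h)
        obtain ⟨i'', hi''⟩ := Aq_nonempty RH hPRH
        have hne'' : i'' ≠ Fin.last m := by
          intro h
          rw [h] at hi''
          exact hPP' ((mem_Aq.mp hi'').2).symm
        have hpP2 := RH.isPath P hPRH
        have hedge'' : (P[0]'(by omega), P[1]) ∈ H i'' := edge_mem_F RH hi'' (by omega)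
        rw [stp_head hpP2 (by omega)] at hedge''
        have hedgeG'' : (s, P[1]) ∈ G i'' := (agree_of_ne hagree hne'') ▸ hedge''
        have := (SL_b RG hnoG hPmem hedgeG'' (List.getElem_mem (by omega)) hxs hxt).1
        exact hne'' (h1 i'' this)
      -- x is an inner vertex of P', and |P'| = 3, so x = P'[1]
      subst hqhP'
      have hcard1 : (Aq RG P).card = 1 := by
        have h3 : Aq RG P ⊆ {Fin.last m} := by
          intro i hi
          simp [h1 i hi]
        have := Finset.card_le_card h3
        have h4 : 1 ≤ (Aq RG P).card := Finset.card_pos.mpr ⟨_, hlastP⟩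
        simp at this
        omega
      have hcard1' : (Aq RH P').card = 1 := by
        have h3 : Aq RH P' ⊆ {Fin.last m} := by
          intro i hi
          simp [h2 i hi]
        have := Finset.card_le_card h3
        have h4 : 1 ≤ (Aq RH P').card := Finset.card_pos.mpr ⟨_, hlastP'⟩
        simp at this
        omega
      have hlen3 : P.length = 3 := by
        have := Aq_card RG hPmem
        omega
      have hlen3' : P'.length = 3 := by
        have := Aq_card RH hP'mem
        omega
      obtain ⟨k, hklen, hk1, hk2, hkx⟩ := stp_pos_of_mem hp' hxqh hxs hxt
      have hk : k = 1 := by omega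
      subst hk
      -- conclude P = P'
      apply List.ext_getElem (by omega)
      intro n h1n h2n
      have hn3 : n < 3 := by omega
      interval_cases n
      · rw [stp_head hp (by omega), stp_head hp' (by omega)]
      · rw [hkx]
      · rw [getElem_idx_congr P (show 2 = P.length - 1 by omega), stp_last hp,
          getElem_idx_congr P' (show 2 = P'.length - 1 by omega), stp_last hp']
end Ex19

/-- The exchange lemma: let `G` and `H` be families of edge sets agreeing
except in their last member (`G₀ = G (last m)`, `H₀ = H (last m)`), neither
having a rainbow `s`–`t` path, regimented by `RG` and `RH` respectively.
Then either `G₀` and `H₀` are both inessential, or the paths assigned to them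
coincide: `RG.I G₀ = RH.I H₀`. -/
theorem stmt_19 {V : Type*} (s t : V) (m : ℕ)
    (G H : Fin (m + 1) → Set (V × V))
    (hagree : ∀ i : Fin m, G i.castSucc = H i.castSucc)
    (RG : Regimentation s t G) (RH : Regimentation s t H)
    (hnoG : ¬ HasRainbowStPath s t G) (hnoH : ¬ HasRainbowStPath s t H) :
    (Fin.last m ∉ RG.ess ∧ Fin.last m ∉ RH.ess) ∨
      RG.I (Fin.last m) = RH.I (Fin.last m) := by
  have hagree' : ∀ i : Fin m, H i.castSucc = G i.castSucc := fun i => (hagree i).symm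
  by_cases hG : Fin.last m ∈ RG.ess
  · have hH : Fin.last m ∈ RH.ess := Ex19.T1 hagree RG RH hnoG hG
    exact Or.inr (Ex19.T2 hagree RG RH hnoG hnoH hG hH)
  · by_cases hH : Fin.last m ∈ RH.ess
    · exact absurd (Ex19.T1 hagree' RH RG hnoH hH) hG
    · exact Or.inl ⟨hG, hH⟩
end
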